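/- arXiv:1607.08782 — 5 statements merged into one kernel-verified Lean document; each statement's English description precedes it below -/
import Mathlib

section
/- Let [(A_1,…,A_k)(B_1,…,B_k)(C_1,…,C_k)(D_1,…,D_k)] be a k-chain decomposition of a bipartite graph G=(U,W,E), and set A = A_1∪…∪A_k, B = B_1∪…∪B_k. Then the parts of the decomposition inside the component G[A∪B] are uniquely determined by G[A∪B], k and A_1; namely: B_1 is the set of vertices of B having a neighbour in A_1; for 2 ≤ i ≤ k−1, A_i is the set of vertices of A∖(A_1∪…∪A_{i−1}) that have at least one non-neighbour in B_{i−1}, and B_i is the set of vertices of B∖(B_1∪…∪B_{i−1}) that have a neighbour in A_i; and if k ≥ 2 then A_k = A∖(A_1∪…∪A_{k−1}) and B_k = B∖(B_1∪…∪B_{k−1}). -/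
universe u

/-- `X` is complete to `Y` in `G`: every vertex of `X` is adjacent to every vertex of `Y`. -/
def CompleteTo {V : Type u} (G : SimpleGraph V) (X Y : Set V) : Prop :=
  ∀ ⦃x⦄, x ∈ X → ∀ ⦃y⦄, y ∈ Y → G.Adj x y

/-- `X` is anticomplete to `Y` in `G`. -/
def AnticompleteTo {V : Type u} (G : SimpleGraph V) (X Y : Set V) : Prop :=
  ∀ ⦃x⦄, x ∈ X → ∀ ⦃y⦄, y ∈ Y → ¬ G.Adj x y

/-- `(U, W)` is a bipartition of the vertex set of `G` into two independent sets. -/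
structure IsBipartition {V : Type u} (G : SimpleGraph V) (U W : Set V) : Prop where
  union_eq : U ∪ W = Set.univ
  disjoint : Disjoint U W
  cross : ∀ ⦃x y⦄, G.Adj x y → (x ∈ U ∧ y ∈ W) ∨ (x ∈ W ∧ y ∈ U)

/-- `G` contains an induced subgraph isomorphic to `H`. -/
def HasInducedCopy {α : Type*} {V : Type u} (H : SimpleGraph α) (G : SimpleGraph V) : Prop :=
  ∃ f : α ↪ V, ∀ a b : α, G.Adj (f a) (f b) ↔ H.Adj a b

/-- `G` has no induced subgraph isomorphic to the chordless path `P_m` on `m` vertices. -/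
def PathFree (m : ℕ) {V : Type u} (G : SimpleGraph V) : Prop :=
  ¬ HasInducedCopy (SimpleGraph.pathGraph m) G

/-- `G` is bipartite: its vertex set can be partitioned into (at most) two independent sets. -/
def Bipartite {V : Type u} (G : SimpleGraph V) : Prop :=
  ∃ U W : Set V, IsBipartition G U W

/-- The bipartite complement of `G` with respect to the parts `U` and `W`:
`u ∈ U` and `w ∈ W` are adjacent iff they are non-adjacent in `G`. -/
def bipComplOn {V : Type u} (G : SimpleGraph V) (U W : Set V) : SimpleGraph V where
  Adj x y := ((x ∈ U ∧ y ∈ W) ∨ (x ∈ W ∧ y ∈ U)) ∧ x ≠ y ∧ ¬ G.Adj x y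
  symm := by
    constructor
    rintro x y ⟨h1, h2, h3⟩
    exact ⟨by tauto, h2.symm, fun h => h3 h.symm⟩
  loopless := by constructor; rintro x ⟨_, h, _⟩; exact h rfl

/-- A `k`-chain decomposition `[(A_1,…,A_k)(B_1,…,B_k)(C_1,…,C_k)(D_1,…,D_k)]` of a
bipartite graph `G` with ordered parts `(U, W)`.  The sets are indexed by `1, …, k`. -/
structure IsChainDecomp {V : Type u} (G : SimpleGraph V) (U W : Set V) (k : ℕ)
    (A B C D : ℕ → Set V) : Prop where
  one_le : 1 ≤ k
  /-- `A_1, …, A_k, C_1, …, C_k` cover `U`. -/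
  U_eq : (⋃ i ∈ Set.Icc 1 k, A i) ∪ (⋃ i ∈ Set.Icc 1 k, C i) = U
  /-- `B_1, …, B_k, D_1, …, D_k` cover `W`. -/
  W_eq : (⋃ i ∈ Set.Icc 1 k, B i) ∪ (⋃ i ∈ Set.Icc 1 k, D i) = W
  /-- the sets `A_1, …, A_k, C_1, …, C_k` are pairwise disjoint. -/
  disjU : ∀ i ∈ Set.Icc 1 k, ∀ j ∈ Set.Icc 1 k,
      (i ≠ j → Disjoint (A i) (A j) ∧ Disjoint (C i) (C j)) ∧ Disjoint (A i) (C j)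
  /-- the sets `B_1, …, B_k, D_1, …, D_k` are pairwise disjoint. -/
  disjW : ∀ i ∈ Set.Icc 1 k, ∀ j ∈ Set.Icc 1 k,
      (i ≠ j → Disjoint (B i) (B j) ∧ Disjoint (D i) (D j)) ∧ Disjoint (B i) (D j)
  /-- for every `i ≤ k-1` the sets `A_i, B_i, C_i, D_i` are non-empty. -/
  nonempty_of_lt : ∀ i, 1 ≤ i → i < k →
      (A i).Nonempty ∧ (B i).Nonempty ∧ (C i).Nonempty ∧ (D i).Nonempty
  /-- for `i = k`, at least one of `A_k, B_k, C_k, D_k` is non-empty. -/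
  nonempty_last : (A k).Nonempty ∨ (B k).Nonempty ∨ (C k).Nonempty ∨ (D k).Nonempty
  /-- every vertex of `B_i` has a neighbour in `A_i`. -/
  B_nbr : ∀ i ∈ Set.Icc 1 k, ∀ b ∈ B i, ∃ a ∈ A i, G.Adj a b
  /-- every vertex of `D_i` has a neighbour in `C_i`. -/
  D_nbr : ∀ i ∈ Set.Icc 1 k, ∀ d ∈ D i, ∃ c ∈ C i, G.Adj c d
  /-- for `2 ≤ i ≤ k-1`, every vertex of `A_i` has a non-neighbour in `B_{i-1}`. -/
  A_nonnbr : ∀ i, 2 ≤ i → i < k → ∀ a ∈ A i, ∃ b ∈ B (i - 1), ¬ G.Adj a b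
  /-- for `2 ≤ i ≤ k-1`, every vertex of `C_i` has a non-neighbour in `D_{i-1}`. -/
  C_nonnbr : ∀ i, 2 ≤ i → i < k → ∀ c ∈ C i, ∃ d ∈ D (i - 1), ¬ G.Adj c d
  /-- `A_i` is anticomplete to `B_j` for `j > i` and complete to `B_j` for `j < i-1`. -/
  AB : ∀ i ∈ Set.Icc 1 k, ∀ j ∈ Set.Icc 1 k,
      (i < j → AnticompleteTo G (A i) (B j)) ∧ (j + 1 < i → CompleteTo G (A i) (B j))
  /-- `C_i` is anticomplete to `D_j` for `j > i` and complete to `D_j` for `j < i-1`. -/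
  CD : ∀ i ∈ Set.Icc 1 k, ∀ j ∈ Set.Icc 1 k,
      (i < j → AnticompleteTo G (C i) (D j)) ∧ (j + 1 < i → CompleteTo G (C i) (D j))
  /-- `A_i` is complete to `D_j` for `j < i` and anticomplete to `D_j` for `j ≥ i`. -/
  AD : ∀ i ∈ Set.Icc 1 k, ∀ j ∈ Set.Icc 1 k,
      (j < i → CompleteTo G (A i) (D j)) ∧ (i ≤ j → AnticompleteTo G (A i) (D j))
  /-- `C_i` is complete to `B_j` for `j < i` and anticomplete to `B_j` for `j ≥ i`. -/
  CB : ∀ i ∈ Set.Icc 1 k, ∀ j ∈ Set.Icc 1 k,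
      (j < i → CompleteTo G (C i) (B j)) ∧ (i ≤ j → AnticompleteTo G (C i) (B j))

/-- `G`, with ordered parts `(U, W)`, admits a `k`-chain decomposition for some `k ≥ 1`. -/
def HasChainDecompOriented {V : Type u} (G : SimpleGraph V) (U W : Set V) : Prop :=
  ∃ k : ℕ, ∃ A B C D : ℕ → Set V, IsChainDecomp G U W k A B C D

/-- `G` admits a chain decomposition, either with respect to `(U, W)` (left)
or with respect to `(W, U)` (right). -/
def HasChainDecomp {V : Type u} (G : SimpleGraph V) (U W : Set V) : Prop :=
  HasChainDecompOriented G U W ∨ HasChainDecompOriented G W U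

/-- In a `k`-chain decomposition of a bipartite graph `G = (U, W, E)` the
parts of the decomposition inside the component `G[A ∪ B]` are uniquely determined by
`G[A ∪ B]`, `k` and `A₁`. -/
theorem chainDecomp_reconstruction {V : Type u} (G : SimpleGraph V) (U W : Set V)
    (k : ℕ) (A B C D : ℕ → Set V) (h : IsChainDecomp G U W k A B C D) :
    B 1 = {b ∈ ⋃ j ∈ Set.Icc 1 k, B j | ∃ a ∈ A 1, G.Adj a b} ∧
    (∀ i, 2 ≤ i → i < k →
      A i = {a ∈ (⋃ j ∈ Set.Icc 1 k, A j) \ (⋃ j ∈ Set.Icc 1 (i - 1), A j) |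
              ∃ b ∈ B (i - 1), ¬ G.Adj a b} ∧
      B i = {b ∈ (⋃ j ∈ Set.Icc 1 k, B j) \ (⋃ j ∈ Set.Icc 1 (i - 1), B j) |
              ∃ a ∈ A i, G.Adj a b}) ∧
    (2 ≤ k →
      A k = (⋃ j ∈ Set.Icc 1 k, A j) \ (⋃ j ∈ Set.Icc 1 (k - 1), A j) ∧
      B k = (⋃ j ∈ Set.Icc 1 k, B j) \ (⋃ j ∈ Set.Icc 1 (k - 1), B j)) := by
  have h1k := h.one_le
  refine ⟨?_, ?_, ?_⟩
  · ext b
    simp only [Set.mem_setOf_eq, Set.mem_iUnion, Set.mem_Icc, exists_prop]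
    constructor
    · intro hb
      exact ⟨⟨1, ⟨le_refl 1, h1k⟩, hb⟩, h.B_nbr 1 ⟨le_refl 1, h1k⟩ b hb⟩
    · rintro ⟨⟨j, hj, hb⟩, a, ha, hab⟩
      rcases eq_or_lt_of_le hj.1 with rfl | hlt
      · exact hb
      · exact absurd hab
          ((h.AB 1 ⟨le_refl 1, h1k⟩ j hj).1 hlt ha hb)
  · intro i h2i hik
    have hiIcc : i ∈ Set.Icc 1 k := ⟨by omega, by omega⟩
    have hi1Icc : i - 1 ∈ Set.Icc 1 k := ⟨by omega, by omega⟩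
    constructor
    · ext a
      simp only [Set.mem_setOf_eq, Set.mem_diff, Set.mem_iUnion, Set.mem_Icc, exists_prop,
        not_exists, not_and]
      constructor
      · intro ha
        refine ⟨⟨⟨i, hiIcc, ha⟩, ?_⟩, h.A_nonnbr i h2i hik a ha⟩
        rintro j hj haj
        have hji : j ≠ i := by omega
        exact ((h.disjU j ⟨hj.1, by omega⟩ i hiIcc).1 hji).1.le_bot ⟨haj, ha⟩
      · rintro ⟨⟨⟨j, hj, ha⟩, hnot⟩, b, hb, hnadj⟩
        have hji : i ≤ j := by
          by_contra hc
          exact hnot j ⟨hj.1, by omega⟩ ha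
        rcases eq_or_lt_of_le hji with rfl | hlt
        · exact ha
        · exact absurd ((h.AB j hj (i - 1) hi1Icc).2 (by omega) ha hb) hnadj
    · ext b
      simp only [Set.mem_setOf_eq, Set.mem_diff, Set.mem_iUnion, Set.mem_Icc, exists_prop,
        not_exists, not_and]
      constructor
      · intro hb
        refine ⟨⟨⟨i, hiIcc, hb⟩, ?_⟩, h.B_nbr i hiIcc b hb⟩
        rintro j hj hbj
        have hji : j ≠ i := by omega
        exact ((h.disjW j ⟨hj.1, by omega⟩ i hiIcc).1 hji).1.le_bot ⟨hbj, hb⟩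
      · rintro ⟨⟨⟨j, hj, hb⟩, hnot⟩, a, ha, hadj⟩
        have hji : i ≤ j := by
          by_contra hc
          exact hnot j ⟨hj.1, by omega⟩ hb
        rcases eq_or_lt_of_le hji with rfl | hlt
        · exact hb
        · exact absurd hadj ((h.AB i hiIcc j hj).1 hlt ha hb)
  · intro h2k
    constructor
    · ext a
      simp only [Set.mem_diff, Set.mem_iUnion, Set.mem_Icc, exists_prop, not_exists, not_and]
      constructor
      · intro ha
        refine ⟨⟨k, ⟨h1k, le_refl k⟩, ha⟩, ?_⟩
        rintro j hj haj
        have hjk : j ≠ k := by omega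
        exact ((h.disjU j ⟨hj.1, by omega⟩ k ⟨h1k, le_refl k⟩).1 hjk).1.le_bot ⟨haj, ha⟩
      · rintro ⟨⟨j, hj, ha⟩, hnot⟩
        have : j = k := by
          by_contra hc
          exact hnot j ⟨hj.1, by omega⟩ ha
        exact this ▸ ha
    · ext b
      simp only [Set.mem_diff, Set.mem_iUnion, Set.mem_Icc, exists_prop, not_exists, not_and]
      constructor
      · intro hb
        refine ⟨⟨k, ⟨h1k, le_refl k⟩, hb⟩, ?_⟩
        rintro j hj hbj
        have hjk : j ≠ k := by omega
        exact ((h.disjW j ⟨hj.1, by omega⟩ k ⟨h1k, le_refl k⟩).1 hjk).1.le_bot ⟨hbj, hb⟩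
      · rintro ⟨⟨j, hj, hb⟩, hnot⟩
        have : j = k := by
          by_contra hc
          exact hnot j ⟨hj.1, by omega⟩ hb
        exact this ▸ hb
end

section
/- Let G=(U,W,E) be a P_7-free bipartite graph such that: A ∪ Q ∪ C is a partition of U; B ∪ R ∪ D is a partition of W; every vertex in B has a neighbour in A; every vertex in R has a neighbour in Q; every vertex in D has a neighbour in C; A is anticomplete to R ∪ D; C is anticomplete to B ∪ R; and every vertex in Q is complete to at least one of the sets B and D. Let Q_B be the set of vertices of Q complete to B with at least one non-neighbour in D, Q_D the set of vertices of Q complete to D with at least one non-neighbour in B, Q_{BD} the set of vertices of Q complete to both B and D, R_B the set of vertices of R having at least one neighbour in Q_B, and R_D the set of vertices of R having at least one neighbour in Q_D. Then every vertex of Q_{BD} is complete to at least one of the sets R_B and R_D. -/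
universe u

lemma buildP7 {V : Type u} (G : SimpleGraph V) (v0 v1 v2 v3 v4 v5 v6 : V)
    (d01 : v0 ≠ v1) (d02 : v0 ≠ v2) (d03 : v0 ≠ v3) (d04 : v0 ≠ v4) (d05 : v0 ≠ v5) (d06 : v0 ≠ v6)
    (d12 : v1 ≠ v2) (d13 : v1 ≠ v3) (d14 : v1 ≠ v4) (d15 : v1 ≠ v5) (d16 : v1 ≠ v6)
    (d23 : v2 ≠ v3) (d24 : v2 ≠ v4) (d25 : v2 ≠ v5) (d26 : v2 ≠ v6)
    (d34 : v3 ≠ v4) (d35 : v3 ≠ v5) (d36 : v3 ≠ v6)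
    (d45 : v4 ≠ v5) (d46 : v4 ≠ v6) (d56 : v5 ≠ v6)
    (e01 : G.Adj v0 v1) (e12 : G.Adj v1 v2) (e23 : G.Adj v2 v3)
    (e34 : G.Adj v3 v4) (e45 : G.Adj v4 v5) (e56 : G.Adj v5 v6)
    (n02 : ¬ G.Adj v0 v2) (n03 : ¬ G.Adj v0 v3) (n04 : ¬ G.Adj v0 v4)
    (n05 : ¬ G.Adj v0 v5) (n06 : ¬ G.Adj v0 v6)
    (n13 : ¬ G.Adj v1 v3) (n14 : ¬ G.Adj v1 v4) (n15 : ¬ G.Adj v1 v5) (n16 : ¬ G.Adj v1 v6)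
    (n24 : ¬ G.Adj v2 v4) (n25 : ¬ G.Adj v2 v5) (n26 : ¬ G.Adj v2 v6)
    (n35 : ¬ G.Adj v3 v5) (n36 : ¬ G.Adj v3 v6) (n46 : ¬ G.Adj v4 v6) :
    HasInducedCopy (SimpleGraph.pathGraph 7) G := by
  have e10 := e01.symm; have e21 := e12.symm; have e32 := e23.symm
  have e43 := e34.symm; have e54 := e45.symm; have e65 := e56.symm
  have n20 : ¬ G.Adj v2 v0 := fun h => n02 h.symm
  have n30 : ¬ G.Adj v3 v0 := fun h => n03 h.symm
  have n40 : ¬ G.Adj v4 v0 := fun h => n04 h.symm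
  have n50 : ¬ G.Adj v5 v0 := fun h => n05 h.symm
  have n60 : ¬ G.Adj v6 v0 := fun h => n06 h.symm
  have n31 : ¬ G.Adj v3 v1 := fun h => n13 h.symm
  have n41 : ¬ G.Adj v4 v1 := fun h => n14 h.symm
  have n51 : ¬ G.Adj v5 v1 := fun h => n15 h.symm
  have n61 : ¬ G.Adj v6 v1 := fun h => n16 h.symm
  have n42 : ¬ G.Adj v4 v2 := fun h => n24 h.symm
  have n52 : ¬ G.Adj v5 v2 := fun h => n25 h.symm
  have n62 : ¬ G.Adj v6 v2 := fun h => n26 h.symm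
  have n53 : ¬ G.Adj v5 v3 := fun h => n35 h.symm
  have n63 : ¬ G.Adj v6 v3 := fun h => n36 h.symm
  have n64 : ¬ G.Adj v6 v4 := fun h => n46 h.symm
  have d10 := d01.symm; have d20 := d02.symm; have d30 := d03.symm
  have d40 := d04.symm; have d50 := d05.symm; have d60 := d06.symm
  have d21 := d12.symm; have d31 := d13.symm; have d41 := d14.symm
  have d51 := d15.symm; have d61 := d16.symm
  have d32 := d23.symm; have d42 := d24.symm; have d52 := d25.symm; have d62 := d26.symm
  have d43 := d34.symm; have d53 := d35.symm; have d63 := d36.symm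
  have d54 := d45.symm; have d64 := d46.symm; have d65 := d56.symm
  refine ⟨⟨![v0, v1, v2, v3, v4, v5, v6], ?_⟩, ?_⟩
  · intro i j h
    fin_cases i <;> fin_cases j <;>
      simp only [Matrix.cons_val_zero, Matrix.cons_val_one, Matrix.head_cons,
        Matrix.cons_val_succ] at h ⊢ <;>
      first | rfl | exact absurd h (by assumption)
  · intro i j
    fin_cases i <;> fin_cases j <;>
      simp only [Function.Embedding.coeFn_mk, Matrix.cons_val_zero, Matrix.cons_val_one,
        Matrix.head_cons, Matrix.cons_val_succ, SimpleGraph.pathGraph_adj] <;>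
      first
        | exact iff_of_false G.irrefl (by decide)
        | exact iff_of_true (by assumption) (by decide)
        | exact iff_of_false (by assumption) (by decide)

/-- (Claim 2 of the paper.)  Under the stated assumptions, every vertex
of `Q_{BD}` is complete to at least one of the sets `R_B` and `R_D`. -/
theorem QBD_complete_to_RB_or_RD {V : Type u} (G : SimpleGraph V) (U W : Set V)
    (A Q C B R D : Set V)
    (hbip : IsBipartition G U W) (hP7 : PathFree 7 G)
    (hU : A ∪ Q ∪ C = U)
    (hUd : Disjoint A Q ∧ Disjoint A C ∧ Disjoint Q C)
    (hW : B ∪ R ∪ D = W)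
    (hWd : Disjoint B R ∧ Disjoint B D ∧ Disjoint R D)
    (hB : ∀ b ∈ B, ∃ a ∈ A, G.Adj a b)
    (hR : ∀ r ∈ R, ∃ q ∈ Q, G.Adj q r)
    (hD : ∀ d ∈ D, ∃ c ∈ C, G.Adj c d)
    (hA : AnticompleteTo G A (R ∪ D))
    (hC : AnticompleteTo G C (B ∪ R))
    (hQ : ∀ q ∈ Q, CompleteTo G {q} B ∨ CompleteTo G {q} D)
    (QB QD QBD RB RD : Set V)
    (hQB : QB = {q ∈ Q | CompleteTo G {q} B ∧ ∃ d ∈ D, ¬ G.Adj q d})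
    (hQD : QD = {q ∈ Q | CompleteTo G {q} D ∧ ∃ b ∈ B, ¬ G.Adj q b})
    (hQBD : QBD = {q ∈ Q | CompleteTo G {q} B ∧ CompleteTo G {q} D})
    (hRB : RB = {r ∈ R | ∃ q ∈ QB, G.Adj q r})
    (hRD : RD = {r ∈ R | ∃ q ∈ QD, G.Adj q r}) :
    ∀ x ∈ QBD, CompleteTo G {x} RB ∨ CompleteTo G {x} RD := by
  -- basic consequences of the bipartition
  have nUU : ∀ ⦃p⦄, p ∈ U → ∀ ⦃q⦄, q ∈ U → ¬ G.Adj p q := by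
    intro p hp q hq h
    rcases hbip.cross h with ⟨_, h2⟩ | ⟨h1, _⟩
    · exact Set.disjoint_left.mp hbip.disjoint hq h2
    · exact Set.disjoint_left.mp hbip.disjoint hp h1
  have nWW : ∀ ⦃p⦄, p ∈ W → ∀ ⦃q⦄, q ∈ W → ¬ G.Adj p q := by
    intro p hp q hq h
    rcases hbip.cross h with ⟨h1, _⟩ | ⟨_, h2⟩
    · exact Set.disjoint_left.mp hbip.disjoint h1 hp
    · exact Set.disjoint_left.mp hbip.disjoint h2 hq
  have neUW : ∀ ⦃p⦄, p ∈ U → ∀ ⦃q⦄, q ∈ W → p ≠ q := by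
    intro p hp q hq hpq
    exact Set.disjoint_left.mp hbip.disjoint hp (hpq ▸ hq)
  have neWU : ∀ ⦃p⦄, p ∈ W → ∀ ⦃q⦄, q ∈ U → p ≠ q := fun p hp q hq => (neUW hq hp).symm
  have neOf : ∀ {X Y : Set V}, Disjoint X Y → ∀ {p q : V}, p ∈ X → q ∈ Y → p ≠ q :=
    by intro X Y hd p q hp hq h; exact Set.disjoint_left.mp hd hp (h ▸ hq)
  have hAU : A ⊆ U := fun z hz => hU ▸ Or.inl (Or.inl hz)
  have hQU : Q ⊆ U := fun z hz => hU ▸ Or.inl (Or.inr hz)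
  have hCU : C ⊆ U := fun z hz => hU ▸ Or.inr hz
  have hBW : B ⊆ W := fun z hz => hW ▸ Or.inl (Or.inl hz)
  have hRW : R ⊆ W := fun z hz => hW ▸ Or.inl (Or.inr hz)
  have hDW : D ⊆ W := fun z hz => hW ▸ Or.inr hz
  intro x hx
  rw [hQBD] at hx
  obtain ⟨hxQ, hxB, hxD⟩ := hx
  by_contra hcon
  push_neg at hcon
  obtain ⟨h1, h2⟩ := hcon
  obtain ⟨rB, hrBmem, hxrB⟩ : ∃ r ∈ RB, ¬ G.Adj x r := by
    by_contra hno; push_neg at hno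
    exact h1 (fun x' hx' y hy => by
      rw [Set.mem_singleton_iff] at hx'; subst hx'; exact hno y hy)
  obtain ⟨rD, hrDmem, hxrD⟩ : ∃ r ∈ RD, ¬ G.Adj x r := by
    by_contra hno; push_neg at hno
    exact h2 (fun x' hx' y hy => by
      rw [Set.mem_singleton_iff] at hx'; subst hx'; exact hno y hy)
  rw [hRB] at hrBmem
  obtain ⟨hrBR, qB, hqBmem, hqBrB⟩ := hrBmem
  rw [hRD] at hrDmem
  obtain ⟨hrDR, qD, hqDmem, hqDrD⟩ := hrDmem
  rw [hQB] at hqBmem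
  obtain ⟨hqBQ, hqBB, d, hdD, hqBd⟩ := hqBmem
  rw [hQD] at hqDmem
  obtain ⟨hqDQ, hqDD, b, hbB, hqDb⟩ := hqDmem
  obtain ⟨a, haA, hab⟩ := hB b hbB
  obtain ⟨c, hcC, hcd⟩ := hD d hdD
  -- adjacency of x
  have hxb : G.Adj x b := hxB rfl hbB
  have hxd : G.Adj x d := hxD rfl hdD
  have hqBb : G.Adj qB b := hqBB rfl hbB
  have hqDd : G.Adj qD d := hqDD rfl hdD
  -- distinctness of the three Q-vertices
  have dqBx : qB ≠ x := fun h => hqBd (h ▸ hxd)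
  have dxqD : x ≠ qD := fun h => hqDb (h ▸ hxb)
  have dqBqD : qB ≠ qD := fun h => hqDb (h ▸ hqBb)
  -- memberships in U/W
  have haU := hAU haA; have hcU := hCU hcC
  have hqBU := hQU hqBQ; have hqDU := hQU hqDQ; have hxU := hQU hxQ
  have hbW := hBW hbB; have hdW := hDW hdD
  have hrBW := hRW hrBR; have hrDW := hRW hrDR
  by_cases hqBrD : G.Adj qB rD
  · -- P7 : a - b - qB - rD - qD - d - c
    exact hP7 (buildP7 G a b qB rD qD d c
      (neUW haU hbW) (neOf hUd.1 haA hqBQ) (neUW haU hrDW) (neOf hUd.1 haA hqDQ)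
      (neUW haU hdW) (neOf hUd.2.1 haA hcC)
      (neWU hbW hqBU) (neOf hWd.1 hbB hrDR) (neWU hbW hqDU) (neOf hWd.2.1 hbB hdD)
      (neWU hbW hcU)
      (neUW hqBU hrDW) dqBqD (neUW hqBU hdW) (neOf hUd.2.2 hqBQ hcC)
      (neWU hrDW hqDU) (neOf hWd.2.2 hrDR hdD) (neWU hrDW hcU)
      (neUW hqDU hdW) (neOf hUd.2.2 hqDQ hcC)
      (neWU hdW hcU)
      hab hqBb.symm hqBrD hqDrD.symm hqDd hcd.symm
      (nUU haU hqBU) (hA haA (Or.inl hrDR)) (nUU haU hqDU)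
      (hA haA (Or.inr hdD)) (nUU haU hcU)
      (nWW hbW hrDW) (fun h => hqDb h.symm) (nWW hbW hdW)
      (fun h => hC hcC (Or.inl hbB) h.symm)
      (nUU hqBU hqDU) hqBd (nUU hqBU hcU)
      (nWW hrDW hdW) (fun h => hC hcC (Or.inr hrDR) h.symm)
      (nUU hqDU hcU))
  · by_cases hqDrB : G.Adj qD rB
    · -- P7 : c - d - qD - rB - qB - b - a
      exact hP7 (buildP7 G c d qD rB qB b a
        (neUW hcU hdW) (neOf hUd.2.2 hqDQ hcC).symm (neUW hcU hrBW)
        (neOf hUd.2.2 hqBQ hcC).symm (neUW hcU hbW) (neOf hUd.2.1 haA hcC).symm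
        (neWU hdW hqDU) (neOf hWd.2.2 hrBR hdD).symm (neWU hdW hqBU)
        (neOf hWd.2.1 hbB hdD).symm (neWU hdW haU)
        (neUW hqDU hrBW) dqBqD.symm (neUW hqDU hbW) (neOf hUd.1 haA hqDQ).symm
        (neWU hrBW hqBU) (neOf hWd.1 hbB hrBR).symm (neWU hrBW haU)
        (neUW hqBU hbW) (neOf hUd.1 haA hqBQ).symm
        (neWU hbW haU)
        hcd hqDd.symm hqDrB hqBrB.symm hqBb hab.symm
        (nUU hcU hqDU) (hC hcC (Or.inr hrBR)) (nUU hcU hqBU)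
        (hC hcC (Or.inl hbB)) (nUU hcU haU)
        (nWW hdW hrBW) (fun h => hqBd h.symm) (nWW hdW hbW)
        (fun h => hA haA (Or.inr hdD) h.symm)
        (nUU hqDU hqBU) hqDb (nUU hqDU haU)
        (nWW hrBW hbW) (fun h => hA haA (Or.inl hrBR) h.symm)
        (nUU hqBU haU))
    · -- P7 : rB - qB - b - x - d - qD - rD
      have drBrD : rB ≠ rD := fun h => hqBrD (h ▸ hqBrB)
      exact hP7 (buildP7 G rB qB b x d qD rD
        (neWU hrBW hqBU) (neOf hWd.1 hbB hrBR).symm (neWU hrBW hxU)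
        (neOf hWd.2.2 hrBR hdD) (neWU hrBW hqDU) drBrD
        (neUW hqBU hbW) dqBx (neUW hqBU hdW) dqBqD (neUW hqBU hrDW)
        (neWU hbW hxU) (neOf hWd.2.1 hbB hdD) (neWU hbW hqDU) (neOf hWd.1 hbB hrDR)
        (neUW hxU hdW) dxqD (neUW hxU hrDW)
        (neWU hdW hqDU) (neOf hWd.2.2 hrDR hdD).symm
        (neUW hqDU hrDW)
        hqBrB.symm hqBb hxb.symm hxd hqDd.symm hqDrD
        (nWW hrBW hbW) (fun h => hxrB h.symm) (nWW hrBW hdW)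
        (fun h => hqDrB h.symm) (nWW hrBW hrDW)
        (nUU hqBU hxU) hqBd (nUU hqBU hqDU) hqBrD
        (nWW hbW hdW) (fun h => hqDb h.symm) (nWW hbW hrDW)
        (nUU hxU hqDU) hxrD
        (nWW hdW hrDW))
end

section
/- If G=(U,W,E) is a P_7-free bipartite graph, then both neighbourhood graphs G_U and G_W are (P_4, C_4)-free. -/
universe u

/-- The neighbourhood graph `G_C` of a part `C`: vertices are the elements of `C` and two
distinct vertices are adjacent iff they have a common neighbour in `G`. -/
def nbrGraph {V : Type u} (G : SimpleGraph V) (C : Set V) : SimpleGraph C where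
  Adj x y := x ≠ y ∧ ∃ z : V, G.Adj x z ∧ G.Adj y z
  symm := by constructor; rintro x y ⟨h1, z, h2, h3⟩; exact ⟨h1.symm, z, h3, h2⟩
  loopless := by constructor; rintro x ⟨h, _⟩; exact h rfl

/-- A graph is complete if every two distinct vertices are adjacent. -/
def IsCompleteGraph {α : Type u} (H : SimpleGraph α) : Prop :=
  ∀ x y : α, x ≠ y → H.Adj x y

lemma key_P7 {V : Type u} (G : SimpleGraph V) (U W : Set V)
    (hbip : IsBipartition G U W) (hP7 : PathFree 7 G)
    (a b c d : U)
    (hab : (nbrGraph G U).Adj a b) (hbc : (nbrGraph G U).Adj b c)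
    (hcd : (nbrGraph G U).Adj c d)
    (hac : ¬ (nbrGraph G U).Adj a c) (hbd : ¬ (nbrGraph G U).Adj b d)
    (hacne : (a : V) ≠ (c : V)) (hbdne : (b : V) ≠ (d : V))
    (hadne : (a : V) ≠ (d : V)) : False := by
  obtain ⟨habne, w1, haw1, hbw1⟩ := hab
  obtain ⟨hbcne, w2, hbw2, hcw2⟩ := hbc
  obtain ⟨hcdne, w3, hcw3, hdw3⟩ := hcd
  -- independence of the parts
  have hUind : ∀ x y : V, x ∈ U → y ∈ U → ¬ G.Adj x y := by
    intro x y hx hy h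
    rcases hbip.cross h with ⟨_, hyW⟩ | ⟨hxW, _⟩
    · exact Set.disjoint_left.mp hbip.disjoint hy hyW
    · exact Set.disjoint_left.mp hbip.disjoint hx hxW
  have hmemW : ∀ (x : U) (z : V), G.Adj (x : V) z → z ∈ W := by
    intro x z h
    rcases hbip.cross h with ⟨_, hzW⟩ | ⟨hxW, _⟩
    · exact hzW
    · exact absurd hxW (Set.disjoint_left.mp hbip.disjoint x.2)
  have hw1W : w1 ∈ W := hmemW a w1 haw1
  have hw2W : w2 ∈ W := hmemW b w2 hbw2
  have hw3W : w3 ∈ W := hmemW c w3 hcw3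
  have hWind : ∀ x y : V, x ∈ W → y ∈ W → ¬ G.Adj x y := by
    intro x y hx hy h
    rcases hbip.cross h with ⟨hxU, _⟩ | ⟨_, hyU⟩
    · exact Set.disjoint_left.mp hbip.disjoint hxU hx
    · exact Set.disjoint_left.mp hbip.disjoint hyU hy
  have hUW : ∀ x y : V, x ∈ U → y ∈ W → x ≠ y := by
    rintro x y hx hy rfl
    exact Set.disjoint_left.mp hbip.disjoint hx hy
  -- cross non-adjacencies
  have n1 : ¬ G.Adj (a : V) w2 := fun h => hac ⟨fun e => hacne (congrArg _ e), w2, h, hcw2⟩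
  have n2 : ¬ G.Adj (a : V) w3 := fun h => hac ⟨fun e => hacne (congrArg _ e), w3, h, hcw3⟩
  have n3 : ¬ G.Adj (c : V) w1 := fun h => hac ⟨fun e => hacne (congrArg _ e), w1, haw1, h⟩
  have n4 : ¬ G.Adj (d : V) w1 := fun h => hbd ⟨fun e => hbdne (congrArg _ e), w1, hbw1, h⟩
  have n5 : ¬ G.Adj (b : V) w3 := fun h => hbd ⟨fun e => hbdne (congrArg _ e), w3, h, hdw3⟩
  have n6 : ¬ G.Adj (d : V) w2 := fun h => hbd ⟨fun e => hbdne (congrArg _ e), w2, hbw2, h⟩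
  -- distinctness
  have dab : (a : V) ≠ b := fun e => habne (Subtype.ext e)
  have dbc : (b : V) ≠ c := fun e => hbcne (Subtype.ext e)
  have dcd : (c : V) ≠ d := fun e => hcdne (Subtype.ext e)
  have dw12 : w1 ≠ w2 := fun e => n1 (e ▸ haw1)
  have dw13 : w1 ≠ w3 := fun e => n2 (e ▸ haw1)
  have dw23 : w2 ≠ w3 := fun e => n5 (e ▸ hbw2)
  -- the embedding
  set f : Fin 7 → V := ![a, w1, b, w2, c, w3, d] with hf
  have hfinj : Function.Injective f := by
    have L : ∀ i : Fin 7, f i ∈ U ∨ f i ∈ W := by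
      intro i
      fin_cases i
      · exact Or.inl a.2
      · exact Or.inr hw1W
      · exact Or.inl b.2
      · exact Or.inr hw2W
      · exact Or.inl c.2
      · exact Or.inr hw3W
      · exact Or.inl d.2
    intro i j hij
    fin_cases i <;> fin_cases j <;>
      first
      | rfl
      | (exfalso; simp only [hf] at hij
         first
         | exact dab hij | exact dab hij.symm
         | exact dbc hij | exact dbc hij.symm
         | exact dcd hij | exact dcd hij.symm
         | exact hacne hij | exact hacne hij.symm
         | exact hbdne hij | exact hbdne hij.symm
         | exact hadne hij | exact hadne hij.symm
         | exact dw12 hij | exact dw12 hij.symm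
         | exact dw13 hij | exact dw13 hij.symm
         | exact dw23 hij | exact dw23 hij.symm
         | exact hUW _ _ a.2 hw1W hij | exact hUW _ _ a.2 hw1W hij.symm
         | exact hUW _ _ a.2 hw2W hij | exact hUW _ _ a.2 hw2W hij.symm
         | exact hUW _ _ a.2 hw3W hij | exact hUW _ _ a.2 hw3W hij.symm
         | exact hUW _ _ b.2 hw1W hij | exact hUW _ _ b.2 hw1W hij.symm
         | exact hUW _ _ b.2 hw2W hij | exact hUW _ _ b.2 hw2W hij.symm
         | exact hUW _ _ b.2 hw3W hij | exact hUW _ _ b.2 hw3W hij.symm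
         | exact hUW _ _ c.2 hw1W hij | exact hUW _ _ c.2 hw1W hij.symm
         | exact hUW _ _ c.2 hw2W hij | exact hUW _ _ c.2 hw2W hij.symm
         | exact hUW _ _ c.2 hw3W hij | exact hUW _ _ c.2 hw3W hij.symm
         | exact hUW _ _ d.2 hw1W hij | exact hUW _ _ d.2 hw1W hij.symm
         | exact hUW _ _ d.2 hw2W hij | exact hUW _ _ d.2 hw2W hij.symm
         | exact hUW _ _ d.2 hw3W hij | exact hUW _ _ d.2 hw3W hij.symm)
  apply hP7
  refine ⟨⟨f, hfinj⟩, ?_⟩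
  intro i j
  have PA : ∀ i j : Fin 7, (SimpleGraph.pathGraph 7).Adj i j ↔
      ((i : ℕ) + 1 = j ∨ (j : ℕ) + 1 = i) := fun i j => SimpleGraph.pathGraph_adj
  simp only [Function.Embedding.coeFn_mk]
  fin_cases i <;> fin_cases j <;>
    simp only [hf, Matrix.cons_val_zero, Matrix.cons_val_one, Matrix.head_cons,
      Matrix.cons_val_two, Matrix.tail_cons, Matrix.cons_val_three, Matrix.cons_val_four,
      Matrix.cons_val_succ, PA] <;>
    norm_num <;>
    first
    | exact haw1 | exact haw1.symm
    | exact hbw1 | exact hbw1.symm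
    | exact hbw2 | exact hbw2.symm
    | exact hcw2 | exact hcw2.symm
    | exact hcw3 | exact hcw3.symm
    | exact hdw3 | exact hdw3.symm
    | exact G.loopless _
    | exact n1 | exact fun h => n1 h.symm
    | exact n2 | exact fun h => n2 h.symm
    | exact n3 | exact fun h => n3 h.symm
    | exact n4 | exact fun h => n4 h.symm
    | exact n5 | exact fun h => n5 h.symm
    | exact n6 | exact fun h => n6 h.symm
    | exact hUind _ _ a.2 b.2 | exact hUind _ _ b.2 a.2
    | exact hUind _ _ a.2 c.2 | exact hUind _ _ c.2 a.2
    | exact hUind _ _ a.2 d.2 | exact hUind _ _ d.2 a.2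
    | exact hUind _ _ b.2 c.2 | exact hUind _ _ c.2 b.2
    | exact hUind _ _ b.2 d.2 | exact hUind _ _ d.2 b.2
    | exact hUind _ _ c.2 d.2 | exact hUind _ _ d.2 c.2
    | exact hWind _ _ hw1W hw2W | exact hWind _ _ hw2W hw1W
    | exact hWind _ _ hw1W hw3W | exact hWind _ _ hw3W hw1W
    | exact hWind _ _ hw2W hw3W | exact hWind _ _ hw3W hw2W

lemma part_free {V : Type u} (G : SimpleGraph V) (U W : Set V)
    (hbip : IsBipartition G U W) (hP7 : PathFree 7 G) :
    ¬ HasInducedCopy (SimpleGraph.pathGraph 4) (nbrGraph G U) ∧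
      ¬ HasInducedCopy (SimpleGraph.cycleGraph 4) (nbrGraph G U) := by
  have coe_ne : ∀ (g : Fin 4 ↪ ↥U) (i j : Fin 4), i ≠ j → ((g i : V) ≠ (g j : V)) := by
    intro g i j hij h
    exact hij (g.injective (Subtype.ext h))
  constructor
  · rintro ⟨g, hg⟩
    refine key_P7 G U W hbip hP7 (g 0) (g 1) (g 2) (g 3) ?_ ?_ ?_ ?_ ?_ ?_ ?_ ?_
    · exact (hg 0 1).mpr (by rw [SimpleGraph.pathGraph_adj]; decide)
    · exact (hg 1 2).mpr (by rw [SimpleGraph.pathGraph_adj]; decide)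
    · exact (hg 2 3).mpr (by rw [SimpleGraph.pathGraph_adj]; decide)
    · intro h; have := (hg 0 2).mp h; rw [SimpleGraph.pathGraph_adj] at this; revert this; decide
    · intro h; have := (hg 1 3).mp h; rw [SimpleGraph.pathGraph_adj] at this; revert this; decide
    · exact coe_ne g 0 2 (by decide)
    · exact coe_ne g 1 3 (by decide)
    · exact coe_ne g 0 3 (by decide)
  · rintro ⟨g, hg⟩
    refine key_P7 G U W hbip hP7 (g 0) (g 1) (g 2) (g 3) ?_ ?_ ?_ ?_ ?_ ?_ ?_ ?_
    · exact (hg 0 1).mpr (by rw [SimpleGraph.cycleGraph_adj]; decide)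
    · exact (hg 1 2).mpr (by rw [SimpleGraph.cycleGraph_adj]; decide)
    · exact (hg 2 3).mpr (by rw [SimpleGraph.cycleGraph_adj]; decide)
    · intro h; have := (hg 0 2).mp h; rw [SimpleGraph.cycleGraph_adj] at this
      revert this; decide
    · intro h; have := (hg 1 3).mp h; rw [SimpleGraph.cycleGraph_adj] at this
      revert this; decide
    · exact coe_ne g 0 2 (by decide)
    · exact coe_ne g 1 3 (by decide)
    · exact coe_ne g 0 3 (by decide)

lemma IsBipartition.symm {V : Type u} {G : SimpleGraph V} {U W : Set V}
    (h : IsBipartition G U W) : IsBipartition G W U :=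
  ⟨by rw [Set.union_comm]; exact h.union_eq, h.disjoint.symm,
    fun x y hxy => (h.cross hxy).symm⟩

/-- If `G = (U, W, E)` is a `P₇`-free bipartite graph, then both
neighbourhood graphs `G_U` and `G_W` are `(P₄, C₄)`-free. -/
theorem nbrGraph_P4_C4_free {V : Type u} (G : SimpleGraph V) (U W : Set V)
    (hbip : IsBipartition G U W) (hP7 : PathFree 7 G) :
    (¬ HasInducedCopy (SimpleGraph.pathGraph 4) (nbrGraph G U) ∧
      ¬ HasInducedCopy (SimpleGraph.cycleGraph 4) (nbrGraph G U)) ∧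
    (¬ HasInducedCopy (SimpleGraph.pathGraph 4) (nbrGraph G W) ∧
      ¬ HasInducedCopy (SimpleGraph.cycleGraph 4) (nbrGraph G W)) :=
  ⟨part_free G U W hbip hP7, part_free G W U hbip.symm hP7⟩
end

section
/- Let G=(U,W,E) be a connected P_7-free bipartite graph in which every two distinct vertices of U have a common neighbour and every two distinct vertices of W have a common neighbour (i.e., both neighbourhood graphs G_U and G_W are complete). Let x, y ∈ U be vertices maximizing |N(x) ∪ N(y)| over all pairs of vertices of U. Then N(x) ∪ N(y) = W. -/
universe u

section Helper

variable {V : Type u}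

set_option maxRecDepth 8000 in
private lemma p7_of_explicit (G : SimpleGraph V) (v0 v1 v2 v3 v4 v5 v6 : V)
    (e01 : G.Adj v0 v1) (e12 : G.Adj v1 v2) (e23 : G.Adj v2 v3) (e34 : G.Adj v3 v4)
    (e45 : G.Adj v4 v5) (e56 : G.Adj v5 v6)
    (n02 : ¬ G.Adj v0 v2) (n03 : ¬ G.Adj v0 v3) (n04 : ¬ G.Adj v0 v4)
    (n05 : ¬ G.Adj v0 v5) (n06 : ¬ G.Adj v0 v6)
    (n13 : ¬ G.Adj v1 v3) (n14 : ¬ G.Adj v1 v4) (n15 : ¬ G.Adj v1 v5) (n16 : ¬ G.Adj v1 v6)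
    (n24 : ¬ G.Adj v2 v4) (n25 : ¬ G.Adj v2 v5) (n26 : ¬ G.Adj v2 v6)
    (n35 : ¬ G.Adj v3 v5) (n36 : ¬ G.Adj v3 v6) (n46 : ¬ G.Adj v4 v6)
    (d02 : v0 ≠ v2) (d03 : v0 ≠ v3) (d04 : v0 ≠ v4) (d05 : v0 ≠ v5) (d06 : v0 ≠ v6)
    (d13 : v1 ≠ v3) (d14 : v1 ≠ v4) (d15 : v1 ≠ v5) (d16 : v1 ≠ v6)
    (d24 : v2 ≠ v4) (d25 : v2 ≠ v5) (d26 : v2 ≠ v6)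
    (d35 : v3 ≠ v5) (d36 : v3 ≠ v6) (d46 : v4 ≠ v6) :
    HasInducedCopy (SimpleGraph.pathGraph 7) G := by
  have d01 := e01.ne; have d12 := e12.ne; have d23 := e23.ne
  have d34 := e34.ne; have d45 := e45.ne; have d56 := e56.ne
  have e10 := e01.symm; have e21 := e12.symm; have e32 := e23.symm
  have e43 := e34.symm; have e54 := e45.symm; have e65 := e56.symm
  have n20 : ¬ G.Adj v2 v0 := fun h => n02 h.symm
  have n30 : ¬ G.Adj v3 v0 := fun h => n03 h.symm
  have n40 : ¬ G.Adj v4 v0 := fun h => n04 h.symm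
  have n50 : ¬ G.Adj v5 v0 := fun h => n05 h.symm
  have n60 : ¬ G.Adj v6 v0 := fun h => n06 h.symm
  have n31 : ¬ G.Adj v3 v1 := fun h => n13 h.symm
  have n41 : ¬ G.Adj v4 v1 := fun h => n14 h.symm
  have n51 : ¬ G.Adj v5 v1 := fun h => n15 h.symm
  have n61 : ¬ G.Adj v6 v1 := fun h => n16 h.symm
  have n42 : ¬ G.Adj v4 v2 := fun h => n24 h.symm
  have n52 : ¬ G.Adj v5 v2 := fun h => n25 h.symm
  have n62 : ¬ G.Adj v6 v2 := fun h => n26 h.symm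
  have n53 : ¬ G.Adj v5 v3 := fun h => n35 h.symm
  have n63 : ¬ G.Adj v6 v3 := fun h => n36 h.symm
  have n64 : ¬ G.Adj v6 v4 := fun h => n46 h.symm
  have l0 : ¬ G.Adj v0 v0 := G.loopless.irrefl v0
  have l1 : ¬ G.Adj v1 v1 := G.loopless.irrefl v1
  have l2 : ¬ G.Adj v2 v2 := G.loopless.irrefl v2
  have l3 : ¬ G.Adj v3 v3 := G.loopless.irrefl v3
  have l4 : ¬ G.Adj v4 v4 := G.loopless.irrefl v4
  have l5 : ¬ G.Adj v5 v5 := G.loopless.irrefl v5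
  have l6 : ¬ G.Adj v6 v6 := G.loopless.irrefl v6
  have r10 : v1 ≠ v0 := fun h => d01 h.symm
  have r20 : v2 ≠ v0 := fun h => d02 h.symm
  have r30 : v3 ≠ v0 := fun h => d03 h.symm
  have r40 : v4 ≠ v0 := fun h => d04 h.symm
  have r50 : v5 ≠ v0 := fun h => d05 h.symm
  have r60 : v6 ≠ v0 := fun h => d06 h.symm
  have r21 : v2 ≠ v1 := fun h => d12 h.symm
  have r31 : v3 ≠ v1 := fun h => d13 h.symm
  have r41 : v4 ≠ v1 := fun h => d14 h.symm
  have r51 : v5 ≠ v1 := fun h => d15 h.symm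
  have r61 : v6 ≠ v1 := fun h => d16 h.symm
  have r32 : v3 ≠ v2 := fun h => d23 h.symm
  have r42 : v4 ≠ v2 := fun h => d24 h.symm
  have r52 : v5 ≠ v2 := fun h => d25 h.symm
  have r62 : v6 ≠ v2 := fun h => d26 h.symm
  have r43 : v4 ≠ v3 := fun h => d34 h.symm
  have r53 : v5 ≠ v3 := fun h => d35 h.symm
  have r63 : v6 ≠ v3 := fun h => d36 h.symm
  have r54 : v5 ≠ v4 := fun h => d45 h.symm
  have r64 : v6 ≠ v4 := fun h => d46 h.symm
  have r65 : v6 ≠ v5 := fun h => d56 h.symm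
  refine ⟨⟨![v0, v1, v2, v3, v4, v5, v6], ?_⟩, ?_⟩
  · intro i j hij
    fin_cases i <;> fin_cases j <;>
      simp only [Matrix.cons_val_zero, Matrix.cons_val_one, Matrix.head_cons,
        Matrix.cons_val_succ, Fin.mk_zero, Fin.mk_one, Matrix.cons_val_fin_one] at hij <;>
      first | rfl | exact absurd hij (by assumption)
  · intro i j
    show G.Adj (![v0, v1, v2, v3, v4, v5, v6] i) (![v0, v1, v2, v3, v4, v5, v6] j) ↔ _
    fin_cases i <;> fin_cases j <;>
      simp only [Matrix.cons_val_zero, Matrix.cons_val_one, Matrix.head_cons,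
        Matrix.cons_val_succ, Fin.mk_zero, Fin.mk_one, Matrix.cons_val_fin_one,
        SimpleGraph.pathGraph_adj, Fin.val_zero, Fin.val_one] <;>
      norm_num <;> assumption

end Helper

/-- Let `G = (U, W, E)` be a connected `P₇`-free bipartite graph whose
two neighbourhood graphs `G_U` and `G_W` are complete, and let `x, y ∈ U` maximize
`|N(x) ∪ N(y)|` over all pairs of vertices of `U`.  Then `N(x) ∪ N(y) = W`. -/
theorem max_neighborhood_union_eq_W {V : Type u} [Fintype V] (G : SimpleGraph V)
    (U W : Set V) (hbip : IsBipartition G U W) (hP7 : PathFree 7 G)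
    (hconn : G.Connected)
    (hGU : IsCompleteGraph (nbrGraph G U)) (hGW : IsCompleteGraph (nbrGraph G W))
    (x y : V) (hx : x ∈ U) (hy : y ∈ U)
    (hmax : ∀ a ∈ U, ∀ b ∈ U,
      (G.neighborSet a ∪ G.neighborSet b).ncard ≤
        (G.neighborSet x ∪ G.neighborSet y).ncard) :
    G.neighborSet x ∪ G.neighborSet y = W := by
  classical
  have hUW : ∀ {a b : V}, G.Adj a b → a ∈ U → b ∈ W := by
    intro a b hab ha
    rcases hbip.cross hab with ⟨_, h⟩ | ⟨h, _⟩
    · exact h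
    · exact (Set.disjoint_left.mp hbip.disjoint ha h).elim
  have hWU : ∀ {a b : V}, G.Adj a b → a ∈ W → b ∈ U := by
    intro a b hab ha
    rcases hbip.cross hab with ⟨h, _⟩ | ⟨_, h⟩
    · exact (Set.disjoint_left.mp hbip.disjoint h ha).elim
    · exact h
  have hUU : ∀ {a b : V}, a ∈ U → b ∈ U → ¬ G.Adj a b := by
    intro a b ha hb hab
    exact Set.disjoint_left.mp hbip.disjoint hb (hUW hab ha)
  have hWW : ∀ {a b : V}, a ∈ W → b ∈ W → ¬ G.Adj a b := by
    intro a b ha hb hab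
    exact Set.disjoint_left.mp hbip.disjoint (hWU hab ha) hb
  have hUWne : ∀ {a b : V}, a ∈ U → b ∈ W → a ≠ b := by
    intro a b ha hb h
    exact Set.disjoint_left.mp hbip.disjoint ha (h ▸ hb)
  have NE1 : ∀ {c p q : V}, G.Adj c p → ¬ G.Adj c q → p ≠ q :=
    fun h1 h2 h => h2 (h ▸ h1)
  have hsub : G.neighborSet x ∪ G.neighborSet y ⊆ W := by
    rintro m (hm | hm)
    · exact hUW hm hx
    · exact hUW hm hy
  by_contra hne
  have hnsub : ¬ (W ⊆ G.neighborSet x ∪ G.neighborSet y) := fun h =>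
    hne (le_antisymm hsub h)
  obtain ⟨w, hwW, hwD⟩ := Set.not_subset.mp hnsub
  have hwnx : ¬ G.Adj x w := fun h => hwD (Or.inl h)
  have hwny : ¬ G.Adj y w := fun h => hwD (Or.inr h)
  have hwx0 : w ≠ x := (hUWne hx hwW).symm
  obtain ⟨u, huw⟩ : ∃ u, G.Adj w u := by
    obtain ⟨p⟩ := hconn.preconnected w x
    cases p with
    | nil => exact absurd rfl hwx0
    | cons h _ => exact ⟨_, h⟩
  have huU : u ∈ U := hWU huw hwW
  -- maximality extraction
  have EX : ∀ a ∈ U, ∀ b ∈ U, ∀ ω : V, (G.Adj a ω ∨ G.Adj b ω) → ¬ G.Adj x ω → ¬ G.Adj y ω →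
      ∃ m : V, (G.Adj x m ∨ G.Adj y m) ∧ ¬ G.Adj a m ∧ ¬ G.Adj b m := by
    intro a ha b hb ω hω hωx hωy
    by_contra hcon
    push_neg at hcon
    have hss : (G.neighborSet x ∪ G.neighborSet y) ⊂ (G.neighborSet a ∪ G.neighborSet b) := by
      rw [Set.ssubset_iff_subset_ne]
      constructor
      · rintro m hm
        have hm' : G.Adj x m ∨ G.Adj y m := by
          rcases hm with hm | hm
          · exact Or.inl hm
          · exact Or.inr hm
        by_cases ham : G.Adj a m
        · exact Or.inl ham
        · exact Or.inr (hcon m hm' ham)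
      · intro heq
        have hωin : ω ∈ G.neighborSet a ∪ G.neighborSet b := by
          rcases hω with h | h
          · exact Or.inl h
          · exact Or.inr h
        rw [← heq] at hωin
        rcases hωin with h | h
        · exact hωx h
        · exact hωy h
    have h1 := Set.ncard_lt_ncard hss (Set.toFinite _)
    have h2 := hmax a ha b hb
    omega
  obtain ⟨wx, hwx1, hwxnu, hwxny⟩ := EX u huU y hy w (Or.inl huw.symm) hwnx hwny
  have hwxx : G.Adj x wx := by
    rcases hwx1 with h | h
    · exact h
    · exact absurd h hwxny
  obtain ⟨wy, hwy1, hwynu, hwynx⟩ := EX u huU x hx w (Or.inl huw.symm) hwnx hwny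
  have hwyy : G.Adj y wy := by
    rcases hwy1 with h | h
    · exact absurd h hwynx
    · exact h
  have hxy : x ≠ y := fun h => hwxny (h ▸ hwxx)
  have hwxW : wx ∈ W := hUW hwxx hx
  have hwyW : wy ∈ W := hUW hwyy hy
  have hwwx : w ≠ wx := fun h => hwnx (h ▸ hwxx)
  have hwwy : w ≠ wy := fun h => hwny (h ▸ hwyy)
  have CN : ∀ w1 : V, w1 ∈ W → ∀ w2 : V, w2 ∈ W → w1 ≠ w2 →
      ∃ c : V, G.Adj w1 c ∧ G.Adj w2 c ∧ c ∈ U := by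
    intro w1 h1 w2 h2 hne12
    have hne' : (⟨w1, h1⟩ : W) ≠ ⟨w2, h2⟩ := fun h => hne12 (congrArg Subtype.val h)
    obtain ⟨-, z, hz1, hz2⟩ := hGW ⟨w1, h1⟩ ⟨w2, h2⟩ hne'
    exact ⟨z, hz1, hz2, hWU hz1 h1⟩
  obtain ⟨a, haw, hawx, haU⟩ := CN w hwW wx hwxW hwwx
  obtain ⟨b, hbw, hbwy, hbU⟩ := CN w hwW wy hwyW hwwy
  have TRIPLE : ∀ c : V, c ∈ U → G.Adj w c → G.Adj wx c → G.Adj wy c → False := by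
    intro c hcU hcw hcwx hcwy
    obtain ⟨mx, hmx1, hmxnc, hmxny⟩ := EX c hcU y hy w (Or.inl hcw.symm) hwnx hwny
    have hmxx : G.Adj x mx := by
      rcases hmx1 with h | h
      · exact h
      · exact absurd h hmxny
    obtain ⟨my, hmy1, hmync, hmynx⟩ := EX c hcU x hx w (Or.inl hcw.symm) hwnx hwny
    have hmyy : G.Adj y my := by
      rcases hmy1 with h | h
      · exact absurd h hmynx
      · exact h
    have hmxW : mx ∈ W := hUW hmxx hx
    have hmyW : my ∈ W := hUW hmyy hy
    -- P7 : mx, x, wx, c, wy, y, my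
    exact hP7 (p7_of_explicit G mx x wx c wy y my
      hmxx.symm hwxx hcwx hcwy.symm hwyy.symm hmyy
      (hWW hmxW hwxW) (fun h => hmxnc h.symm) (hWW hmxW hwyW)
      (fun h => hmxny h.symm) (hWW hmxW hmyW)
      (hUU hx hcU) hwynx (hUU hx hy) hmynx
      (hWW hwxW hwyW) (fun h => hwxny h.symm) (hWW hwxW hmyW)
      (hUU hcU hy) hmync (hWW hwyW hmyW)
      ((NE1 hcwx.symm hmxnc).symm)
      ((hUWne hcU hmxW).symm) (NE1 hmxx hwynx) ((hUWne hy hmxW).symm)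
      (NE1 hmxx hmynx)
      ((NE1 hcw (fun h => hwnx h.symm)).symm) (hUWne hx hwyW) hxy (hUWne hx hmyW)
      (NE1 hwxx hwynx) ((hUWne hy hwxW).symm) (NE1 hwxx hmynx)
      (NE1 hcw (fun h => hwny h.symm)) (hUWne hcU hmyW)
      (NE1 hcwy.symm hmync))
  by_cases hab1 : G.Adj wy a
  · exact TRIPLE a haU haw hawx hab1
  by_cases hab2 : G.Adj wx b
  · exact TRIPLE b hbU hbw hab2 hbwy
  -- final P7 : y, wy, b, w, a, wx, x
  exact hP7 (p7_of_explicit G y wy b w a wx x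
    hwyy hbwy hbw.symm haw hawx.symm hwxx.symm
    (hUU hy hbU) hwny (hUU hy haU) hwxny (hUU hy hx)
    (hWW hwyW hwW) hab1 (hWW hwyW hwxW) (fun h => hwynx h.symm)
    (hUU hbU haU) (fun h => hab2 h.symm) (hUU hbU hx)
    (hWW hwW hwxW) (fun h => hwnx h.symm) (hUU haU hx)
    ((NE1 hbw (fun h => hwny h.symm)).symm) (hUWne hy hwW)
    ((NE1 haw (fun h => hwny h.symm)).symm) (hUWne hy hwxW) hxy.symm
    (NE1 hwyy hwny) ((hUWne haU hwyW).symm) ((NE1 hwxx hwynx).symm)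
    ((hUWne hx hwyW).symm)
    ((NE1 hawx hab2).symm) (hUWne hbU hwxW) (NE1 hbw (fun h => hwnx h.symm))
    ((NE1 hwxx hwnx).symm) ((hUWne hx hwW).symm)
    (NE1 haw (fun h => hwnx h.symm)))
end

section
/- Let G=(U,W,E) be a P_7-free bipartite graph and let x, y ∈ U be vertices maximizing |N(x) ∪ N(y)| over all pairs of vertices of U. Set S_x = N(x) ∖ N(y) and S_y = N(y) ∖ N(x). Then every vertex z ∈ U that has a neighbour in W ∖ (N(x) ∪ N(y)) is anticomplete to S_x or anticomplete to S_y. -/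
universe u

/-- Let `G = (U, W, E)` be a `P₇`-free bipartite graph, let `x, y ∈ U`
maximize `|N(x) ∪ N(y)|`, and set `S_x = N(x) ∖ N(y)`, `S_y = N(y) ∖ N(x)`.  Then every
vertex `z ∈ U` with a neighbour in `W ∖ (N(x) ∪ N(y))` is anticomplete to `S_x` or
anticomplete to `S_y`. -/
theorem neighbour_outside_anticomplete {V : Type u} [Fintype V] (G : SimpleGraph V)
    (U W : Set V) (hbip : IsBipartition G U W) (hP7 : PathFree 7 G)
    (x y : V) (hx : x ∈ U) (hy : y ∈ U)
    (hmax : ∀ a ∈ U, ∀ b ∈ U,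
      (G.neighborSet a ∪ G.neighborSet b).ncard ≤
        (G.neighborSet x ∪ G.neighborSet y).ncard)
    (z : V) (hz : z ∈ U)
    (hzout : ∃ w ∈ W \ (G.neighborSet x ∪ G.neighborSet y), G.Adj z w) :
    AnticompleteTo G {z} (G.neighborSet x \ G.neighborSet y) ∨
      AnticompleteTo G {z} (G.neighborSet y \ G.neighborSet x) := by
  classical
  by_contra hcon
  push_neg at hcon
  obtain ⟨hAx, hAy⟩ := hcon
  obtain ⟨sx, hsxS, hzsx⟩ : ∃ s ∈ G.neighborSet x \ G.neighborSet y, G.Adj z s := by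
    by_contra h
    push_neg at h
    exact hAx fun u hu v hv => by
      rw [Set.mem_singleton_iff] at hu; subst hu; exact h v hv
  obtain ⟨sy, hsyS, hzsy⟩ : ∃ s ∈ G.neighborSet y \ G.neighborSet x, G.Adj z s := by
    by_contra h
    push_neg at h
    exact hAy fun u hu v hv => by
      rw [Set.mem_singleton_iff] at hu; subst hu; exact h v hv
  obtain ⟨w, hwmem, hzw⟩ := hzout
  have hwout : w ∉ G.neighborSet x ∪ G.neighborSet y := hwmem.2
  -- find a ∈ N(x) \ (N(y) ∪ N(z))
  have key : ∀ (A B : Set V), B.ncard ≤ A.ncard → w ∈ B → w ∉ A → ∃ c ∈ A, c ∉ B := by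
    intro A B hle hwB hwA
    by_contra h
    push_neg at h
    have hss : A ⊂ B := ⟨h, fun hBA => hwA (hBA hwB)⟩
    exact absurd (Set.ncard_lt_ncard hss (Set.toFinite B)) (not_lt.mpr hle)
  obtain ⟨a, haA, haB⟩ := key (G.neighborSet x ∪ G.neighborSet y)
    (G.neighborSet z ∪ G.neighborSet y) (hmax z hz y hy) (Or.inl hzw) hwout
  have haNy : a ∉ G.neighborSet y := fun h => haB (Or.inr h)
  have hxa : G.Adj x a := haA.resolve_right haNy
  have nza : ¬ G.Adj z a := fun h => haB (Or.inl h)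
  have nya : ¬ G.Adj y a := haNy
  obtain ⟨b, hbA, hbB⟩ := key (G.neighborSet x ∪ G.neighborSet y)
    (G.neighborSet x ∪ G.neighborSet z) (hmax x hx z hz) (Or.inr hzw) hwout
  have hbNx : b ∉ G.neighborSet x := fun h => hbB (Or.inl h)
  have hyb : G.Adj y b := hbA.resolve_left hbNx
  have nzb : ¬ G.Adj z b := fun h => hbB (Or.inr h)
  have nxb : ¬ G.Adj x b := hbNx
  have hxsx : G.Adj x sx := hsxS.1
  have nysx : ¬ G.Adj y sx := hsxS.2
  have hysy : G.Adj y sy := hsyS.1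
  have nxsy : ¬ G.Adj x sy := hsyS.2
  -- bipartition consequences
  have hUU : ∀ {u v : V}, u ∈ U → v ∈ U → ¬ G.Adj u v := by
    intro u v hu hv h
    rcases hbip.cross h with ⟨_, h2⟩ | ⟨h1, _⟩
    · exact Set.disjoint_left.mp hbip.disjoint hv h2
    · exact Set.disjoint_left.mp hbip.disjoint hu h1
  have hWof : ∀ {u v : V}, u ∈ U → G.Adj u v → v ∈ W := by
    intro u v hu h
    rcases hbip.cross h with ⟨_, h2⟩ | ⟨h1, _⟩
    · exact h2
    · exact absurd h1 (Set.disjoint_left.mp hbip.disjoint hu)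
  have hWW : ∀ {u v : V}, u ∈ W → v ∈ W → ¬ G.Adj u v := by
    intro u v hu hv h
    rcases hbip.cross h with ⟨h1, _⟩ | ⟨_, h2⟩
    · exact Set.disjoint_left.mp hbip.disjoint h1 hu
    · exact Set.disjoint_left.mp hbip.disjoint h2 hv
  have hWa : a ∈ W := hWof hx hxa
  have hWsx : sx ∈ W := hWof hx hxsx
  have hWsy : sy ∈ W := hWof hy hysy
  have hWb : b ∈ W := hWof hy hyb
  -- all edges, both orientations
  have hax := hxa.symm
  have hsxx := hxsx.symm
  have hsxz := hzsx.symm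
  have hsyz := hzsy.symm
  have hsyy := hysy.symm
  have hby := hyb.symm
  -- all non-edges, both orientations
  have naz : ¬ G.Adj a z := fun h => nza h.symm
  have nay : ¬ G.Adj a y := fun h => nya h.symm
  have nsyx : ¬ G.Adj sy x := fun h => nxsy h.symm
  have nbx : ¬ G.Adj b x := fun h => nxb h.symm
  have nsxy : ¬ G.Adj sx y := fun h => nysx h.symm
  have nbz : ¬ G.Adj b z := fun h => nzb h.symm
  have nxy : ¬ G.Adj x y := hUU hx hy
  have nyx : ¬ G.Adj y x := hUU hy hx
  have nxz : ¬ G.Adj x z := hUU hx hz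
  have nzx : ¬ G.Adj z x := hUU hz hx
  have nyz : ¬ G.Adj y z := hUU hy hz
  have nzy : ¬ G.Adj z y := hUU hz hy
  have nasx : ¬ G.Adj a sx := hWW hWa hWsx
  have nsxa : ¬ G.Adj sx a := hWW hWsx hWa
  have nasy : ¬ G.Adj a sy := hWW hWa hWsy
  have nsya : ¬ G.Adj sy a := hWW hWsy hWa
  have nab : ¬ G.Adj a b := hWW hWa hWb
  have nba : ¬ G.Adj b a := hWW hWb hWa
  have nsxsy : ¬ G.Adj sx sy := hWW hWsx hWsy
  have nsysx : ¬ G.Adj sy sx := hWW hWsy hWsx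
  have nsxb : ¬ G.Adj sx b := hWW hWsx hWb
  have nbsx : ¬ G.Adj b sx := hWW hWb hWsx
  have nsyb : ¬ G.Adj sy b := hWW hWsy hWb
  have nbsy : ¬ G.Adj b sy := hWW hWb hWsy
  -- distinctness facts
  have hneUW : ∀ {u w : V}, u ∈ U → w ∈ W → u ≠ w := by
    intro u w hu hw e
    exact Set.disjoint_left.mp hbip.disjoint hu (e.symm ▸ hw)
  have dxy : x ≠ y := fun e => nysx (e ▸ hxsx)
  have dxz : x ≠ z := fun e => nza (e ▸ hxa)
  have dyz : y ≠ z := fun e => nzb (e ▸ hyb)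
  have dasx : a ≠ sx := fun e => (e ▸ nza) hzsx
  have dasy : a ≠ sy := fun e => nxsy (e ▸ hxa)
  have dab : a ≠ b := fun e => nxb (e ▸ hxa)
  have dsxsy : sx ≠ sy := fun e => nxsy (e ▸ hxsx)
  have dsxb : sx ≠ b := fun e => nzb (e ▸ hzsx)
  have dsyb : sy ≠ b := fun e => nzb (e ▸ hzsy)
  have dxa : x ≠ a := hneUW hx hWa
  have dxsx : x ≠ sx := hneUW hx hWsx
  have dxsy : x ≠ sy := hneUW hx hWsy
  have dxb : x ≠ b := hneUW hx hWb
  have dya : y ≠ a := hneUW hy hWa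
  have dysx : y ≠ sx := hneUW hy hWsx
  have dysy : y ≠ sy := hneUW hy hWsy
  have dyb : y ≠ b := hneUW hy hWb
  have dza : z ≠ a := hneUW hz hWa
  have dzsx : z ≠ sx := hneUW hz hWsx
  have dzsy : z ≠ sy := hneUW hz hWsy
  have dzb : z ≠ b := hneUW hz hWb
  have dyx := dxy.symm
  have dzx := dxz.symm
  have dzy := dyz.symm
  have dsxa := dasx.symm
  have dsya := dasy.symm
  have dba := dab.symm
  have dsysx := dsxsy.symm
  have dbsx := dsxb.symm
  have dbsy := dsyb.symm
  have dax := dxa.symm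
  have dsxx := dxsx.symm
  have dsyx := dxsy.symm
  have dbx := dxb.symm
  have day := dya.symm
  have dsxy := dysx.symm
  have dsyy := dysy.symm
  have dby := dyb.symm
  have daz := dza.symm
  have dsxz := dzsx.symm
  have dsyz' := dzsy.symm
  have dbz := dzb.symm
  apply hP7
  refine ⟨⟨![a, x, sx, z, sy, y, b], ?_⟩, ?_⟩
  · intro i j hij
    fin_cases i <;> fin_cases j <;> simp at hij ⊢ <;>
      first | rfl | exact absurd hij (by assumption)
  · intro i j
    fin_cases i <;> fin_cases j <;>
      simp [SimpleGraph.pathGraph_adj,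
        show ((3:Fin 7):ℕ) = 3 from rfl, show ((4:Fin 7):ℕ) = 4 from rfl,
        show ((5:Fin 7):ℕ) = 5 from rfl, show ((6:Fin 7):ℕ) = 6 from rfl,
        show (![a, x, sx, z, sy, y, b] 5 = y) from rfl,
        show (![a, x, sx, z, sy, y, b] 6 = b) from rfl] <;>
      assumption
end
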